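/- Let Ψ : [0,∞)² → [0,∞) satisfy (Ψ1)–(Ψ4) and let Φ be the loading–unloading density built from Ψ. Then for every fixed z₁,z₂ > 0 and for l,j ∈ {1,2} with l ≠ j, the map y_j ↦ ∂_{y_l}Φ(y,z) is nonincreasing on (0,∞); equivalently, the mixed second derivative ∂²Φ/∂y₁∂y₂, which equals ∂₁₂Ψ(y₁,y₂) on R₁(z), ∂₁₂Ψ(z₁,y₂)·(y₁/z₁) on R₂(z), ∂₁₂Ψ(y₁,z₂)·(y₂/z₂) on R₃(z), and ∂₁₂Ψ(z₁,z₂)·(y₁/z₁)·(y₂/z₂) on R₄(z), is nonpositive wherever it exists. -/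

import Mathlib

open MeasureTheory Set

/-- A loading density `Ψ : [0,∞)² → [0,∞)` together with its partial derivatives
`Ψ₁, Ψ₂, Ψ₁₁, Ψ₂₂, Ψ₁₂, Ψ₁₁₂, Ψ₁₂₂`, satisfying assumptions (Ψ1)–(Ψ4). -/
structure LoadingDensity where
  Ψ : ℝ → ℝ → ℝ
  Ψ₁ : ℝ → ℝ → ℝ
  Ψ₂ : ℝ → ℝ → ℝ
  Ψ₁₁ : ℝ → ℝ → ℝ
  Ψ₂₂ : ℝ → ℝ → ℝ
  Ψ₁₂ : ℝ → ℝ → ℝ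
  Ψ₁₁₂ : ℝ → ℝ → ℝ
  Ψ₁₂₂ : ℝ → ℝ → ℝ
  /-- `Ψ` is `[0,∞)`-valued on the quadrant. -/
  nonneg : ∀ y₁ y₂ : ℝ, 0 ≤ y₁ → 0 ≤ y₂ → 0 ≤ Ψ y₁ y₂
  /-- (Ψ1) -/
  zero : Ψ 0 0 = 0
  /-- (Ψ2): boundedness. -/
  bounded : ∃ M : ℝ, ∀ y₁ y₂ : ℝ, 0 ≤ y₁ → 0 ≤ y₂ → Ψ y₁ y₂ ≤ M
  /-- (Ψ2): Lipschitz continuity. -/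
  lipschitz : ∃ L : ℝ, ∀ y₁ y₂ y₁' y₂' : ℝ, 0 ≤ y₁ → 0 ≤ y₂ → 0 ≤ y₁' → 0 ≤ y₂' →
    |Ψ y₁ y₂ - Ψ y₁' y₂'| ≤ L * (|y₁ - y₁'| + |y₂ - y₂'|)
  /-- `Ψ₁` is the first partial derivative of `Ψ` on `(0,∞)²`. -/
  hasDeriv₁ : ∀ y₁ y₂ : ℝ, 0 < y₁ → 0 < y₂ → HasDerivAt (fun t => Ψ t y₂) (Ψ₁ y₁ y₂) y₁
  /-- `Ψ₂` is the second partial derivative of `Ψ` on `(0,∞)²`. -/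
  hasDeriv₂ : ∀ y₁ y₂ : ℝ, 0 < y₁ → 0 < y₂ → HasDerivAt (fun t => Ψ y₁ t) (Ψ₂ y₁ y₂) y₂
  /-- `Ψ₁₂` is the mixed second partial derivative on `(0,∞)²`. -/
  hasDeriv₁₂ : ∀ y₁ y₂ : ℝ, 0 < y₁ → 0 < y₂ → HasDerivAt (fun t => Ψ₁ y₁ t) (Ψ₁₂ y₁ y₂) y₂
  /-- (Ψ2): `∇Ψ` and `∂₁₂Ψ` are locally Lipschitz on `(0,∞)²`. -/
  gradLocLip : ∀ K : Set (ℝ × ℝ), IsCompact K → K ⊆ Ioi (0:ℝ) ×ˢ Ioi (0:ℝ) →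
    ∃ L : ℝ, ∀ p ∈ K, ∀ q ∈ K,
      |Ψ₁ p.1 p.2 - Ψ₁ q.1 q.2| ≤ L * ‖p - q‖ ∧
      |Ψ₂ p.1 p.2 - Ψ₂ q.1 q.2| ≤ L * ‖p - q‖ ∧
      |Ψ₁₂ p.1 p.2 - Ψ₁₂ q.1 q.2| ≤ L * ‖p - q‖
  /-- a.e. second derivative `Ψ₁₁`. -/
  hasDeriv₁₁ : ∀ᵐ p ∂(volume : Measure (ℝ × ℝ)), 0 < p.1 → 0 < p.2 →
    HasDerivAt (fun t => Ψ₁ t p.2) (Ψ₁₁ p.1 p.2) p.1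
  /-- a.e. second derivative `Ψ₂₂`. -/
  hasDeriv₂₂ : ∀ᵐ p ∂(volume : Measure (ℝ × ℝ)), 0 < p.1 → 0 < p.2 →
    HasDerivAt (fun t => Ψ₂ p.1 t) (Ψ₂₂ p.1 p.2) p.2
  /-- a.e. third derivative `Ψ₁₁₂`. -/
  hasDeriv₁₁₂ : ∀ᵐ p ∂(volume : Measure (ℝ × ℝ)), 0 < p.1 → 0 < p.2 →
    HasDerivAt (fun t => Ψ₁₂ t p.2) (Ψ₁₁₂ p.1 p.2) p.1
  /-- a.e. third derivative `Ψ₁₂₂`. -/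
  hasDeriv₁₂₂ : ∀ᵐ p ∂(volume : Measure (ℝ × ℝ)), 0 < p.1 → 0 < p.2 →
    HasDerivAt (fun t => Ψ₁₂ p.1 t) (Ψ₁₂₂ p.1 p.2) p.2
  /-- (Ψ3): `∂ᵢΨ ≥ max(yᵢ∂ᵢᵢΨ,0)` and `∂₁₂Ψ ≤ min(yᵢ∂ᵢᵢⱼΨ,0)` a.e. on `[0,∞)²`. -/
  psi3 : ∀ᵐ p ∂(volume : Measure (ℝ × ℝ)), 0 ≤ p.1 → 0 ≤ p.2 →
    max (p.1 * Ψ₁₁ p.1 p.2) 0 ≤ Ψ₁ p.1 p.2 ∧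
    max (p.2 * Ψ₂₂ p.1 p.2) 0 ≤ Ψ₂ p.1 p.2 ∧
    Ψ₁₂ p.1 p.2 ≤ min (p.1 * Ψ₁₁₂ p.1 p.2) 0 ∧
    Ψ₁₂ p.1 p.2 ≤ min (p.2 * Ψ₁₂₂ p.1 p.2) 0
  /-- (Ψ4). -/
  psi4 : ∃ M : ℝ, ∀ y₁ y₂ : ℝ, 0 < y₁ → 0 < y₂ → (y₁ + y₂) * |Ψ₁₂ y₁ y₂| ≤ M

/-- The loading–unloading density `Φ` built from a loading density `Ψ`. -/
noncomputable def Phi (L : LoadingDensity) (y₁ y₂ z₁ z₂ : ℝ) : ℝ :=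
  if z₁ ≤ y₁ then
    if z₂ ≤ y₂ then L.Ψ y₁ y₂
    else L.Ψ y₁ z₂ - z₂ / 2 * L.Ψ₂ y₁ z₂ * (1 - (y₂ / z₂) ^ 2)
  else
    if z₂ ≤ y₂ then L.Ψ z₁ y₂ - z₁ / 2 * L.Ψ₁ z₁ y₂ * (1 - (y₁ / z₁) ^ 2)
    else L.Ψ z₁ z₂ - z₁ / 2 * L.Ψ₁ z₁ z₂ * (1 - (y₁ / z₁) ^ 2)
      - z₂ / 2 * L.Ψ₂ z₁ z₂ * (1 - (y₂ / z₂) ^ 2)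
      + z₁ * z₂ / 4 * L.Ψ₁₂ z₁ z₂ * (1 - (y₁ / z₁) ^ 2) * (1 - (y₂ / z₂) ^ 2)

/-- The first component of the gradient in `y` of the loading–unloading density `Φ`
(the cohesive tension in direction 1 of the potential-based model). -/
noncomputable def PhiY1 (L : LoadingDensity) (y₁ y₂ z₁ z₂ : ℝ) : ℝ :=
  if z₁ ≤ y₁ then
    if z₂ ≤ y₂ then L.Ψ₁ y₁ y₂
    else L.Ψ₁ y₁ z₂ - z₂ / 2 * L.Ψ₁₂ y₁ z₂ * (1 - (y₂ / z₂) ^ 2)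
  else
    if z₂ ≤ y₂ then L.Ψ₁ z₁ y₂ * (y₁ / z₁)
    else (L.Ψ₁ z₁ z₂ - z₂ / 2 * L.Ψ₁₂ z₁ z₂ * (1 - (y₂ / z₂) ^ 2)) * (y₁ / z₁)

/-- The second component of the gradient in `y` of the loading–unloading density `Φ`. -/
noncomputable def PhiY2 (L : LoadingDensity) (y₁ y₂ z₁ z₂ : ℝ) : ℝ :=
  if z₂ ≤ y₂ then
    if z₁ ≤ y₁ then L.Ψ₂ y₁ y₂
    else L.Ψ₂ z₁ y₂ - z₁ / 2 * L.Ψ₁₂ z₁ y₂ * (1 - (y₁ / z₁) ^ 2)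
  else
    if z₁ ≤ y₁ then L.Ψ₂ y₁ z₂ * (y₂ / z₂)
    else (L.Ψ₂ z₁ z₂ - z₁ / 2 * L.Ψ₁₂ z₁ z₂ * (1 - (y₁ / z₁) ^ 2)) * (y₂ / z₂)

/-- The mixed second derivative `∂²Φ/∂y₁∂y₂` of the loading–unloading density. -/
noncomputable def PhiY12 (L : LoadingDensity) (y₁ y₂ z₁ z₂ : ℝ) : ℝ :=
  if z₁ ≤ y₁ then
    if z₂ ≤ y₂ then L.Ψ₁₂ y₁ y₂
    else L.Ψ₁₂ y₁ z₂ * (y₂ / z₂)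
  else
    if z₂ ≤ y₂ then L.Ψ₁₂ z₁ y₂ * (y₁ / z₁)
    else L.Ψ₁₂ z₁ z₂ * (y₁ / z₁) * (y₂ / z₂)

lemma psi12_nonpos (L : LoadingDensity) (y₁ y₂ : ℝ) (h₁ : 0 < y₁) (h₂ : 0 < y₂) :
    L.Ψ₁₂ y₁ y₂ ≤ 0 := by
  by_contra hpos
  push_neg at hpos
  set p : ℝ × ℝ := (y₁, y₂) with hp
  set r : ℝ := min y₁ y₂ / 2 with hr
  have hr0 : 0 < r := by positivity
  have hKsub : Metric.closedBall p r ⊆ Ioi (0:ℝ) ×ˢ Ioi (0:ℝ) := by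
    intro q hq
    rw [Metric.mem_closedBall] at hq
    have h1 : |q.1 - p.1| ≤ dist q p := by
      rw [dist_eq_norm]
      exact (norm_fst_le (q - p))
    have h2 : |q.2 - p.2| ≤ dist q p := by
      rw [dist_eq_norm]
      exact (norm_snd_le (q - p))
    have hmin : r ≤ y₁ / 2 := by
      rw [hr]; gcongr; exact min_le_left _ _
    have hmin2 : r ≤ y₂ / 2 := by
      rw [hr]; gcongr; exact min_le_right _ _
    constructor
    · have := abs_le.1 (h1.trans hq)
      simp only [hp] at this ⊢
      exact mem_Ioi.2 (by linarith [this.1])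
    · have := abs_le.1 (h2.trans hq)
      simp only [hp] at this ⊢
      exact mem_Ioi.2 (by linarith [this.1])
  obtain ⟨C, hC⟩ := L.gradLocLip (Metric.closedBall p r) (isCompact_closedBall p r) hKsub
  set ε := L.Ψ₁₂ y₁ y₂ with hε
  set δ : ℝ := min r (ε / (|C| + 1)) with hδ
  have hδ0 : 0 < δ := lt_min hr0 (by positivity)
  have hball : Metric.ball p δ ⊆ {q : ℝ × ℝ | 0 < q.1 ∧ 0 < q.2 ∧ 0 < L.Ψ₁₂ q.1 q.2} := by
    intro q hq
    have hqK : q ∈ Metric.closedBall p r :=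
      Metric.mem_closedBall.2 (le_trans (Metric.mem_ball.1 hq).le (min_le_left _ _))
    have hqQ := hKsub hqK
    refine ⟨hqQ.1, hqQ.2, ?_⟩
    have hpK : p ∈ Metric.closedBall p r := Metric.mem_closedBall_self hr0.le
    have hlip := (hC p hpK q hqK).2.2
    have hdist : ‖p - q‖ < δ := by
      rw [← dist_eq_norm, dist_comm]
      exact Metric.mem_ball.1 hq
    have h1 : |L.Ψ₁₂ p.1 p.2 - L.Ψ₁₂ q.1 q.2| ≤ |C| * ‖p - q‖ :=
      hlip.trans (mul_le_mul_of_nonneg_right (le_abs_self C) (norm_nonneg _))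
    have h2 : |C| * ‖p - q‖ < (|C| + 1) * (ε / (|C| + 1)) := by
      have : ‖p - q‖ < ε / (|C| + 1) := lt_of_lt_of_le hdist (min_le_right _ _)
      calc |C| * ‖p - q‖ ≤ |C| * (ε / (|C| + 1)) := by
            apply mul_le_mul_of_nonneg_left this.le (abs_nonneg C)
        _ < (|C| + 1) * (ε / (|C| + 1)) := by
            apply mul_lt_mul_of_pos_right (by linarith) (by positivity)
    have h3 : (|C| + 1) * (ε / (|C| + 1)) = ε := by
      field_simp
    have h4 : |ε - L.Ψ₁₂ q.1 q.2| < ε := by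
      calc |ε - L.Ψ₁₂ q.1 q.2| = |L.Ψ₁₂ p.1 p.2 - L.Ψ₁₂ q.1 q.2| := by rw [hp]
        _ ≤ |C| * ‖p - q‖ := h1
        _ < ε := by rw [← h3]; exact h2
    have := (abs_lt.1 h4).2
    linarith
  have hnull : volume {q : ℝ × ℝ | 0 < q.1 ∧ 0 < q.2 ∧ 0 < L.Ψ₁₂ q.1 q.2} = 0 := by
    have hae : ∀ᵐ q ∂(volume : Measure (ℝ × ℝ)),
        q ∉ {q : ℝ × ℝ | 0 < q.1 ∧ 0 < q.2 ∧ 0 < L.Ψ₁₂ q.1 q.2} := by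
      filter_upwards [L.psi3] with q hq
      rintro ⟨h1, h2, h3⟩
      have := (hq h1.le h2.le).2.2.1
      have : L.Ψ₁₂ q.1 q.2 ≤ 0 := this.trans (min_le_right _ _)
      linarith
    simpa [ae_iff] using hae
  have hpos' : 0 < volume (Metric.ball p δ) := Metric.measure_ball_pos volume p hδ0
  have : volume (Metric.ball p δ) = 0 :=
    le_antisymm (hnull ▸ measure_mono hball) zero_le
  simp [this] at hpos'

lemma psi1_anti (L : LoadingDensity) (y₁ : ℝ) (h₁ : 0 < y₁) :
    AntitoneOn (fun t => L.Ψ₁ y₁ t) (Ioi 0) := by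
  apply antitoneOn_of_deriv_nonpos (convex_Ioi 0)
  · intro t ht
    exact (L.hasDeriv₁₂ y₁ t h₁ ht).continuousAt.continuousWithinAt
  · intro t ht
    rw [interior_Ioi] at ht
    exact (L.hasDeriv₁₂ y₁ t h₁ ht).differentiableAt.differentiableWithinAt
  · intro t ht
    rw [interior_Ioi] at ht
    rw [(L.hasDeriv₁₂ y₁ t h₁ ht).deriv]
    exact psi12_nonpos L y₁ t h₁ ht

lemma psi2_anti (L : LoadingDensity) (w : ℝ) (hw : 0 < w) {s t : ℝ}
    (hs : 0 < s) (hst : s ≤ t) : L.Ψ₂ t w ≤ L.Ψ₂ s w := by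
  have ht : 0 < t := hs.trans_le hst
  have hg : ∀ u v : ℝ, 0 < u → u ≤ v →
      0 ≤ (L.Ψ s v - L.Ψ s u) - (L.Ψ t v - L.Ψ t u) := by
    intro u v hu huv
    have hv : 0 < v := hu.trans_le huv
    have hanti : AntitoneOn (fun x => L.Ψ x v - L.Ψ x u) (Ioi 0) := by
      apply antitoneOn_of_deriv_nonpos (convex_Ioi 0)
      · intro x hx
        exact ((L.hasDeriv₁ x v hx hv).sub (L.hasDeriv₁ x u hx hu)).continuousAt.continuousWithinAt
      · intro x hx
        rw [interior_Ioi] at hx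
        exact ((L.hasDeriv₁ x v hx hv).sub
          (L.hasDeriv₁ x u hx hu)).differentiableAt.differentiableWithinAt
      · intro x hx
        rw [interior_Ioi] at hx
        rw [HasDerivAt.deriv (f := fun x => L.Ψ x v - L.Ψ x u) ((L.hasDeriv₁ x v hx hv).sub (L.hasDeriv₁ x u hx hu))]
        have := psi1_anti L x hx (mem_Ioi.2 hu) (mem_Ioi.2 hv) huv
        simpa using sub_nonpos.2 this
    have := hanti (mem_Ioi.2 hs) (mem_Ioi.2 ht) hst
    dsimp only at this
    linarith
  set F : ℝ → ℝ := fun u => L.Ψ s u - L.Ψ t u with hFdef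
  have hF : HasDerivAt F (L.Ψ₂ s w - L.Ψ₂ t w) w :=
    (L.hasDeriv₂ s w hs hw).sub (L.hasDeriv₂ t w ht hw)
  have hslope := (hasDerivAt_iff_tendsto_slope.mp hF).mono_left
    (nhdsWithin_mono w (fun x hx => ne_of_gt hx : Ioi w ⊆ {w}ᶜ))
  have hnn : ∀ᶠ u in nhdsWithin w (Ioi w), 0 ≤ slope F w u := by
    filter_upwards [self_mem_nhdsWithin] with u hu
    have hu' : w < u := hu
    have hF' : F w ≤ F u := by
      have := hg w u hw hu'.le
      simp only [hFdef]
      linarith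
    rw [slope_def_field]
    have : (0:ℝ) < u - w := by linarith
    exact div_nonneg (by linarith) this.le
  have : 0 ≤ L.Ψ₂ s w - L.Ψ₂ t w := ge_of_tendsto hslope hnn
  linarith

lemma key_deriv (L : LoadingDensity) (a z₂ : ℝ) (ha : 0 < a) (hz₂ : 0 < z₂)
    (y₂ : ℝ) (hy₂ : 0 < y₂) :
    HasDerivAt (fun t => if z₂ ≤ t then L.Ψ₁ a t
        else L.Ψ₁ a z₂ - z₂ / 2 * L.Ψ₁₂ a z₂ * (1 - (t / z₂) ^ 2))
      (if z₂ ≤ y₂ then L.Ψ₁₂ a y₂ else L.Ψ₁₂ a z₂ * (y₂ / z₂)) y₂ := by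
  have hquad : ∀ x : ℝ,
      HasDerivAt (fun t => L.Ψ₁ a z₂ - z₂ / 2 * L.Ψ₁₂ a z₂ * (1 - (t / z₂) ^ 2))
        (L.Ψ₁₂ a z₂ * (x / z₂)) x := by
    intro x
    have h1 : HasDerivAt (fun t : ℝ => (t / z₂) ^ 2) (2 * (x / z₂) ^ 1 * (1 / z₂)) x := by
      simpa using ((hasDerivAt_id x).div_const z₂).fun_pow 2
    have h2 := ((h1.const_sub 1).const_mul (z₂ / 2 * L.Ψ₁₂ a z₂)).const_sub (L.Ψ₁ a z₂)
    refine h2.congr_deriv ?_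
    field_simp
  rcases lt_trichotomy y₂ z₂ with hlt | heq | hgt
  · rw [if_neg (not_le.2 hlt)]
    apply (hquad y₂).congr_of_eventuallyEq
    filter_upwards [Iio_mem_nhds hlt] with t ht
    rw [if_neg (not_le.2 ht)]
  · subst heq
    rw [if_pos le_rfl]
    have hleft : HasDerivWithinAt (fun t => if y₂ ≤ t then L.Ψ₁ a t
        else L.Ψ₁ a y₂ - y₂ / 2 * L.Ψ₁₂ a y₂ * (1 - (t / y₂) ^ 2))
        (L.Ψ₁₂ a y₂) (Iic y₂) y₂ := by
      have h := (hquad y₂).hasDerivWithinAt (s := Iic y₂)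
      have hd : L.Ψ₁₂ a y₂ * (y₂ / y₂) = L.Ψ₁₂ a y₂ := by
        rw [div_self hy₂.ne', mul_one]
      rw [hd] at h
      apply h.congr
      · intro t ht
        by_cases h' : y₂ ≤ t
        · have htt : t = y₂ := le_antisymm ht h'
          subst htt
          rw [if_pos le_rfl, div_self hy₂.ne']
          ring
        · rw [if_neg h']
      · rw [if_pos le_rfl, div_self hy₂.ne']
        ring
    have hright : HasDerivWithinAt (fun t => if y₂ ≤ t then L.Ψ₁ a t
        else L.Ψ₁ a y₂ - y₂ / 2 * L.Ψ₁₂ a y₂ * (1 - (t / y₂) ^ 2))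
        (L.Ψ₁₂ a y₂) (Ici y₂) y₂ := by
      have h := (L.hasDeriv₁₂ a y₂ ha hy₂).hasDerivWithinAt (s := Ici y₂)
      apply h.congr
      · intro t ht
        rw [if_pos (mem_Ici.mp ht)]
      · rw [if_pos le_rfl]
    have h := hleft.union hright
    rw [Iic_union_Ici] at h
    exact hasDerivWithinAt_univ.mp h
  · rw [if_pos hgt.le]
    apply (L.hasDeriv₁₂ a y₂ ha hy₂).congr_of_eventuallyEq
    filter_upwards [Ioi_mem_nhds hgt] with t ht
    rw [if_pos (le_of_lt ht)]

lemma g_anti (L : LoadingDensity) (z₁ w : ℝ) (hz₁ : 0 < z₁) (hw : 0 < w) :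
    AntitoneOn (fun t => if z₁ ≤ t then L.Ψ₂ t w
      else L.Ψ₂ z₁ w - z₁ / 2 * L.Ψ₁₂ z₁ w * (1 - (t / z₁) ^ 2)) (Ioi 0) := by
  intro x hx y hy hxy
  simp only [mem_Ioi] at hx hy
  have hP : L.Ψ₁₂ z₁ w ≤ 0 := psi12_nonpos L z₁ w hz₁ hw
  have hc : z₁ / 2 * L.Ψ₁₂ z₁ w ≤ 0 :=
    mul_nonpos_iff.2 (Or.inl ⟨by positivity, hP⟩)
  by_cases hyz : z₁ ≤ y
  · by_cases hxz : z₁ ≤ x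
    · simp only [if_pos hyz, if_pos hxz]
      exact psi2_anti L w hw hx hxy
    · simp only [if_pos hyz, if_neg hxz]
      have h1 : L.Ψ₂ y w ≤ L.Ψ₂ z₁ w := psi2_anti L w hw hz₁ hyz
      have h2 : 0 ≤ 1 - (x / z₁) ^ 2 := by
        have h3 : x / z₁ ≤ 1 := (div_le_one hz₁).2 (le_of_not_ge hxz)
        have h4 : 0 ≤ x / z₁ := by positivity
        nlinarith
      nlinarith [mul_nonneg (neg_nonneg.2 hc) h2]
  · have hxz : ¬ z₁ ≤ x := fun h => hyz (h.trans hxy)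
    simp only [if_neg hyz, if_neg hxz]
    have h4 : 0 ≤ x / z₁ := by positivity
    have h3 : x / z₁ ≤ y / z₁ := by gcongr
    have hAB : (x / z₁) ^ 2 ≤ (y / z₁) ^ 2 := by nlinarith
    nlinarith [mul_nonneg (neg_nonneg.2 hc) (sub_nonneg.2 hAB)]
/-- for fixed `z₁,z₂ > 0` the map `y_j ↦ ∂_{y_l}Φ(y,z)` (`j ≠ l`) is
nonincreasing on `(0,∞)`; equivalently, the mixed second derivative `∂²Φ/∂y₁∂y₂`,
given by the piecewise formula `PhiY12`, is nonpositive. -/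
theorem statement6 (L : LoadingDensity) (z₁ z₂ : ℝ) (hz₁ : 0 < z₁) (hz₂ : 0 < z₂) :
    (∀ y₁ : ℝ, 0 < y₁ → AntitoneOn (fun t => PhiY1 L y₁ t z₁ z₂) (Ioi 0)) ∧
    (∀ y₂ : ℝ, 0 < y₂ → AntitoneOn (fun t => PhiY2 L t y₂ z₁ z₂) (Ioi 0)) ∧
    (∀ y₁ y₂ : ℝ, 0 < y₁ → 0 < y₂ →
      HasDerivAt (fun t => PhiY1 L y₁ t z₁ z₂) (PhiY12 L y₁ y₂ z₁ z₂) y₂ ∧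
      PhiY12 L y₁ y₂ z₁ z₂ ≤ 0) := by
  have hmain : ∀ y₁ y₂ : ℝ, 0 < y₁ → 0 < y₂ →
      HasDerivAt (fun t => PhiY1 L y₁ t z₁ z₂) (PhiY12 L y₁ y₂ z₁ z₂) y₂ ∧
      PhiY12 L y₁ y₂ z₁ z₂ ≤ 0 := by
    intro y₁ y₂ hy₁ hy₂
    constructor
    · by_cases h : z₁ ≤ y₁
      · have hk := key_deriv L y₁ z₂ hy₁ hz₂ y₂ hy₂
        have hfun : (fun t => PhiY1 L y₁ t z₁ z₂) = fun t => if z₂ ≤ t then L.Ψ₁ y₁ t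
            else L.Ψ₁ y₁ z₂ - z₂ / 2 * L.Ψ₁₂ y₁ z₂ * (1 - (t / z₂) ^ 2) := by
          funext t
          simp only [PhiY1, if_pos h]
        have hval : PhiY12 L y₁ y₂ z₁ z₂ = if z₂ ≤ y₂ then L.Ψ₁₂ y₁ y₂
            else L.Ψ₁₂ y₁ z₂ * (y₂ / z₂) := by
          simp only [PhiY12, if_pos h]
        rw [hfun, hval]
        exact hk
      · have hk := (key_deriv L z₁ z₂ hz₁ hz₂ y₂ hy₂).mul_const (y₁ / z₁)
        have hfun : (fun t => PhiY1 L y₁ t z₁ z₂) = fun t => (if z₂ ≤ t then L.Ψ₁ z₁ t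
            else L.Ψ₁ z₁ z₂ - z₂ / 2 * L.Ψ₁₂ z₁ z₂ * (1 - (t / z₂) ^ 2)) * (y₁ / z₁) := by
          funext t
          simp only [PhiY1, if_neg h]
          split_ifs <;> ring
        have hval : PhiY12 L y₁ y₂ z₁ z₂ = (if z₂ ≤ y₂ then L.Ψ₁₂ z₁ y₂
            else L.Ψ₁₂ z₁ z₂ * (y₂ / z₂)) * (y₁ / z₁) := by
          simp only [PhiY12, if_neg h]
          split_ifs <;> ring
        rw [hfun, hval]
        exact hk
    · have h12 := psi12_nonpos L
      unfold PhiY12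
      split_ifs with h1 h2 h2
      · exact h12 _ _ (hz₁.trans_le h1) (hz₂.trans_le h2)
      · exact mul_nonpos_iff.2 (Or.inr ⟨h12 _ _ (hz₁.trans_le h1) hz₂, by positivity⟩)
      · exact mul_nonpos_iff.2 (Or.inr ⟨h12 _ _ hz₁ (hz₂.trans_le h2), by positivity⟩)
      · refine mul_nonpos_iff.2 (Or.inr ⟨?_, by positivity⟩)
        exact mul_nonpos_iff.2 (Or.inr ⟨h12 _ _ hz₁ hz₂, by positivity⟩)
  refine ⟨?_, ?_, hmain⟩
  · intro y₁ hy₁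
    apply antitoneOn_of_deriv_nonpos (convex_Ioi 0)
    · intro t ht
      exact ((hmain y₁ t hy₁ ht).1).continuousAt.continuousWithinAt
    · intro t ht
      rw [interior_Ioi] at ht
      exact ((hmain y₁ t hy₁ ht).1).differentiableAt.differentiableWithinAt
    · intro t ht
      rw [interior_Ioi] at ht
      rw [((hmain y₁ t hy₁ ht).1).deriv]
      exact (hmain y₁ t hy₁ ht).2
  · intro y₂ hy₂ a ha b hb hab
    simp only [mem_Ioi] at ha hb
    by_cases h : z₂ ≤ y₂
    · have := g_anti L z₁ y₂ hz₁ (hz₂.trans_le h) (mem_Ioi.2 ha) (mem_Ioi.2 hb) hab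
      dsimp only at this ⊢
      have ea : PhiY2 L a y₂ z₁ z₂ = if z₁ ≤ a then L.Ψ₂ a y₂
          else L.Ψ₂ z₁ y₂ - z₁ / 2 * L.Ψ₁₂ z₁ y₂ * (1 - (a / z₁) ^ 2) := by
        simp only [PhiY2, if_pos h]
      have eb : PhiY2 L b y₂ z₁ z₂ = if z₁ ≤ b then L.Ψ₂ b y₂
          else L.Ψ₂ z₁ y₂ - z₁ / 2 * L.Ψ₁₂ z₁ y₂ * (1 - (b / z₁) ^ 2) := by
        simp only [PhiY2, if_pos h]
      rw [ea, eb]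
      exact this
    · have := g_anti L z₁ z₂ hz₁ hz₂ (mem_Ioi.2 ha) (mem_Ioi.2 hb) hab
      dsimp only at this ⊢
      have hnn : 0 ≤ y₂ / z₂ := by positivity
      have ea : PhiY2 L a y₂ z₁ z₂ = (if z₁ ≤ a then L.Ψ₂ a z₂
          else L.Ψ₂ z₁ z₂ - z₁ / 2 * L.Ψ₁₂ z₁ z₂ * (1 - (a / z₁) ^ 2)) * (y₂ / z₂) := by
        simp only [PhiY2, if_neg h]
        split_ifs <;> ring
      have eb : PhiY2 L b y₂ z₁ z₂ = (if z₁ ≤ b then L.Ψ₂ b z₂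
          else L.Ψ₂ z₁ z₂ - z₁ / 2 * L.Ψ₁₂ z₁ z₂ * (1 - (b / z₁) ^ 2)) * (y₂ / z₂) := by
        simp only [PhiY2, if_neg h]
        split_ifs <;> ring
      rw [ea, eb]
      exact mul_le_mul_of_nonneg_right this hnn
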